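/- Let 𝒢 be a family of connected non-trivial graphs on a common vertex set V and let ℋ be a family of non-trivial graphs on a common vertex set V'. If there exists a simultaneous adjacency basis of ℋ which is also a simultaneous dominating set of ℋ, and for every simultaneous adjacency basis B of ℋ there exist H ∈ ℋ and v ∈ V'∖B such that B ⊆ N_H(v), then Sd_A(𝒢⊙ℋ) = |V| · Sd_A(ℋ) + Sγ(𝒢). -/

import Mathlib

open SimpleGraph

/-- `S` is a metric generator for `G`: every pair of distinct vertices is
distinguished by some element of `S` via the shortest-path distance. -/
def IsMetricGen {V : Type*} (G : SimpleGraph V) (S : Set V) : Prop :=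
  ∀ u v : V, u ≠ v → ∃ s ∈ S, G.dist s u ≠ G.dist s v

/-- `S` is an adjacency generator for `G`. -/
def IsAdjGen {V : Type*} (G : SimpleGraph V) (S : Set V) : Prop :=
  ∀ x y : V, x ∉ S → y ∉ S → x ≠ y → ∃ s ∈ S, Xor' (G.Adj s x) (G.Adj s y)

/-- `S` is a simultaneous metric generator for the family `𝒢`. -/
def IsSimMetricGen {V : Type*} (𝒢 : Set (SimpleGraph V)) (S : Set V) : Prop :=
  ∀ G ∈ 𝒢, IsMetricGen G S

/-- `S` is a simultaneous adjacency generator for the family `ℋ`. -/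
def IsSimAdjGen {V : Type*} (ℋ : Set (SimpleGraph V)) (S : Set V) : Prop :=
  ∀ H ∈ ℋ, IsAdjGen H S

/-- The simultaneous metric dimension of a family of graphs. -/
noncomputable def Sd {V : Type*} (𝒢 : Set (SimpleGraph V)) : ℕ :=
  sInf {n | ∃ S : Set V, S.ncard = n ∧ IsSimMetricGen 𝒢 S}

/-- The simultaneous adjacency dimension of a family of graphs. -/
noncomputable def SdA {V : Type*} (ℋ : Set (SimpleGraph V)) : ℕ :=
  sInf {n | ∃ S : Set V, S.ncard = n ∧ IsSimAdjGen ℋ S}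

/-- The adjacency dimension of a graph. -/
noncomputable def adjDim {V : Type*} (G : SimpleGraph V) : ℕ := SdA {G}

/-- `B` is an adjacency basis of `G`. -/
def IsAdjBasis {V : Type*} (G : SimpleGraph V) (B : Set V) : Prop :=
  IsAdjGen G B ∧ B.ncard = adjDim G

/-- `B` is a simultaneous adjacency basis of the family `ℋ`. -/
def IsSimAdjBasis {V : Type*} (ℋ : Set (SimpleGraph V)) (B : Set V) : Prop :=
  IsSimAdjGen ℋ B ∧ B.ncard = SdA ℋ

/-- `D` is a dominating set of `G`. -/
def IsDomSet {V : Type*} (G : SimpleGraph V) (D : Set V) : Prop :=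
  ∀ v ∉ D, ∃ u ∈ D, G.Adj u v

/-- `D` is a simultaneous dominating set of the family `𝒢`. -/
def IsSimDomSet {V : Type*} (𝒢 : Set (SimpleGraph V)) (D : Set V) : Prop :=
  ∀ G ∈ 𝒢, IsDomSet G D

/-- The simultaneous domination number of a family of graphs. -/
noncomputable def Sgamma {V : Type*} (𝒢 : Set (SimpleGraph V)) : ℕ :=
  sInf {n | ∃ D : Set V, D.ncard = n ∧ IsSimDomSet 𝒢 D}

/-- The domination number of a graph. -/
noncomputable def domNum {V : Type*} (G : SimpleGraph V) : ℕ := Sgamma {G}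

/-- `γ'(G) = min over vertices `v` of `γ(G - v)`. -/
noncomputable def gammaPrime {V : Type*} (G : SimpleGraph V) : ℕ :=
  sInf {n | ∃ v : V, n = domNum (G.induce {v}ᶜ)}

/-- The corona product `G ⊙ H`: one copy of `G` together with a copy of `H`
for each vertex `i` of `G`, joining `i` to every vertex of its copy. -/
def corona {V V' : Type*} (G : SimpleGraph V) (H : SimpleGraph V') :
    SimpleGraph (V ⊕ V × V') where
  Adj x y :=
    match x, y with
    | Sum.inl i, Sum.inl j => G.Adj i j
    | Sum.inl i, Sum.inr p => i = p.1
    | Sum.inr p, Sum.inl j => p.1 = j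
    | Sum.inr p, Sum.inr q => p.1 = q.1 ∧ H.Adj p.2 q.2
  symm := ⟨by
    rintro (i | p) (j | q) h
    · exact G.adj_symm h
    · exact h.symm
    · exact h.symm
    · exact ⟨h.1.symm, H.adj_symm h.2⟩⟩
  loopless := ⟨by
    rintro (i | p) h
    · exact G.loopless.irrefl i h
    · exact H.loopless.irrefl p.2 h.2⟩

/-- The family `{G ⊙ H : G ∈ 𝒢, H ∈ ℋ}` of corona products. -/
def coronaFam {V V' : Type*} (𝒢 : Set (SimpleGraph V)) (ℋ : Set (SimpleGraph V')) :
    Set (SimpleGraph (V ⊕ V × V')) :=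
  {K | ∃ G ∈ 𝒢, ∃ H ∈ ℋ, K = corona G H}

/-- The join `G + H` of two (vertex-disjoint) graphs. -/
def joinG {V₁ V₂ : Type*} (G : SimpleGraph V₁) (H : SimpleGraph V₂) :
    SimpleGraph (V₁ ⊕ V₂) where
  Adj x y :=
    match x, y with
    | Sum.inl a, Sum.inl b => G.Adj a b
    | Sum.inl _, Sum.inr _ => True
    | Sum.inr _, Sum.inl _ => True
    | Sum.inr a, Sum.inr b => H.Adj a b
  symm := ⟨by
    rintro (a | a) (b | b) h
    · exact G.adj_symm h
    · trivial
    · trivial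
    · exact H.adj_symm h⟩
  loopless := ⟨by
    rintro (a | a) h
    · exact G.loopless.irrefl a h
    · exact H.loopless.irrefl a h⟩

/-- The family `{G + H : G ∈ 𝒢, H ∈ ℋ}` of joins. -/
def joinFam {V₁ V₂ : Type*} (𝒢 : Set (SimpleGraph V₁)) (ℋ : Set (SimpleGraph V₂)) :
    Set (SimpleGraph (V₁ ⊕ V₂)) :=
  {K | ∃ G ∈ 𝒢, ∃ H ∈ ℋ, K = joinG G H}

/-- The family `𝒢_B(G)`: all graphs `G'` such that, for some permutation `f` of the
vertex set fixing `B` pointwise, `N_{G'}(x) = f(N_G(x))` for every `x ∈ B`. -/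
def GBfam {V : Type*} (G : SimpleGraph V) (B : Set V) : Set (SimpleGraph V) :=
  {G' | ∃ f : Equiv.Perm V, (∀ x ∈ B, f x = x) ∧
    ∀ x ∈ B, G'.neighborSet x = f '' (G.neighborSet x)}
@[simp] lemma corona_adj_inl_inl {V V' : Type*} {G : SimpleGraph V} {H : SimpleGraph V'}
    {i j : V} : (corona G H).Adj (Sum.inl i) (Sum.inl j) ↔ G.Adj i j := Iff.rfl

@[simp] lemma corona_adj_inl_inr {V V' : Type*} {G : SimpleGraph V} {H : SimpleGraph V'}
    {i : V} {p : V × V'} : (corona G H).Adj (Sum.inl i) (Sum.inr p) ↔ i = p.1 := Iff.rfl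

@[simp] lemma corona_adj_inr_inl {V V' : Type*} {G : SimpleGraph V} {H : SimpleGraph V'}
    {j : V} {p : V × V'} : (corona G H).Adj (Sum.inr p) (Sum.inl j) ↔ p.1 = j := Iff.rfl

@[simp] lemma corona_adj_inr_inr {V V' : Type*} {G : SimpleGraph V} {H : SimpleGraph V'}
    {p q : V × V'} :
    (corona G H).Adj (Sum.inr p) (Sum.inr q) ↔ p.1 = q.1 ∧ H.Adj p.2 q.2 := Iff.rfl

lemma ncard_decomp {V V' : Type*} [Fintype V] [Fintype V'] (S : Set (V ⊕ V × V')) :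
    S.ncard = {i | Sum.inl i ∈ S}.ncard + ∑ i : V, {u | Sum.inr (i, u) ∈ S}.ncard := by
  classical
  have hT : ∀ (T : Set (V × V')), T.ncard = ∑ i : V, {u | (i, u) ∈ T}.ncard := by
    intro T
    rw [Set.ncard_eq_toFinset_card',
      Finset.card_eq_sum_card_fiberwise (f := Prod.fst) (t := Finset.univ)
        (fun _ _ => Finset.mem_univ _)]
    refine Finset.sum_congr rfl fun i _ => ?_
    rw [Set.ncard_eq_toFinset_card']
    have himg : (Set.toFinset T).filter (fun p => p.1 = i)
        = (Set.toFinset {u | (i, u) ∈ T}).image (fun u => (i, u)) := by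
      ext ⟨a, b⟩
      simp only [Finset.mem_filter, Set.mem_toFinset, Finset.mem_image, Set.mem_setOf_eq,
        Prod.mk.injEq]
      constructor
      · rintro ⟨h1, rfl⟩; exact ⟨b, h1, rfl, rfl⟩
      · rintro ⟨u, hu, rfl, rfl⟩; exact ⟨hu, rfl⟩
    rw [himg, Finset.card_image_of_injective _ (fun a b h => by simpa using h)]
  have hS : S = Sum.inl '' {i | Sum.inl i ∈ S} ∪ Sum.inr '' {p : V × V' | Sum.inr p ∈ S} := by
    ext (i | p) <;> simp
  have hdisj : Disjoint (Sum.inl '' {i | Sum.inl i ∈ S})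
      (Sum.inr '' {p : V × V' | Sum.inr p ∈ S}) := by
    rw [Set.disjoint_left]
    rintro x ⟨i, _, rfl⟩ ⟨p, _, h⟩
    simp at h
  conv_lhs => rw [hS]
  rw [Set.ncard_union_eq hdisj, Set.ncard_image_of_injective _ Sum.inl_injective,
    Set.ncard_image_of_injective _ Sum.inr_injective, hT]
  rfl

theorem statement_11 {V V' : Type*} [Fintype V] [Fintype V'] [Nontrivial V] [Nontrivial V']
    (𝒢 : Set (SimpleGraph V)) (h𝒢ne : 𝒢.Nonempty) (h𝒢 : ∀ G ∈ 𝒢, G.Connected)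
    (ℋ : Set (SimpleGraph V')) (hℋne : ℋ.Nonempty)
    (hex : ∃ B : Set V', IsSimAdjBasis ℋ B ∧ IsSimDomSet ℋ B)
    (hall : ∀ B : Set V', IsSimAdjBasis ℋ B →
      ∃ H ∈ ℋ, ∃ v : V', v ∉ B ∧ B ⊆ H.neighborSet v) :
    SdA (coronaFam 𝒢 ℋ) = Fintype.card V * SdA ℋ + Sgamma 𝒢 := by
  classical
  obtain ⟨B, ⟨hBgen, hBcard⟩, hBdom⟩ := hex
  have hBne : B.Nonempty := by
    rcases B.eq_empty_or_nonempty with h | h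
    · exfalso
      obtain ⟨H, hH⟩ := hℋne
      obtain ⟨x, y, hxy⟩ := exists_pair_ne V'
      obtain ⟨s, hs, -⟩ := hBgen H hH x y (by simp [h]) (by simp [h]) hxy
      simp [h] at hs
    · exact h
  obtain ⟨D, hDcard, hDdom⟩ : ∃ D : Set V, D.ncard = Sgamma 𝒢 ∧ IsSimDomSet 𝒢 D := by
    have h : Sgamma 𝒢 ∈ {n | ∃ D : Set V, D.ncard = n ∧ IsSimDomSet 𝒢 D} :=
      Nat.sInf_mem ⟨(Set.univ : Set V).ncard, Set.univ, rfl,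
        fun G _ v hv => absurd (Set.mem_univ v) hv⟩
    obtain ⟨D, h1, h2⟩ := h
    exact ⟨D, h1, h2⟩
  apply le_antisymm
  · -- upper bound
    set S : Set (V ⊕ V × V') := {x | Sum.elim (· ∈ D) (fun p => p.2 ∈ B) x} with hSdef
    have hgen : IsSimAdjGen (coronaFam 𝒢 ℋ) S := by
      rintro K ⟨G, hG, H, hH, rfl⟩ x y hx hy hxy
      obtain ⟨b0, hb0⟩ := hBne
      rcases x with i | ⟨i, u⟩ <;> rcases y with k | ⟨k, v⟩
      · have hik : i ≠ k := fun h => hxy (congrArg Sum.inl h)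
        exact ⟨Sum.inr (i, b0), hb0, Or.inl ⟨rfl, fun h => hik h⟩⟩
      · obtain ⟨d, hd, hdi⟩ := hDdom G hG i hx
        by_cases hik : i = k
        · subst hik
          exact ⟨Sum.inl d, hd, Or.inl ⟨hdi, fun h => G.loopless.irrefl i ((show d = i from h) ▸ hdi)⟩⟩
        · obtain ⟨s, hsB, hsv⟩ := hBdom H hH v hy
          exact ⟨Sum.inr (k, s), hsB, Or.inr ⟨⟨rfl, hsv⟩, fun h => hik h.symm⟩⟩
      · obtain ⟨d, hd, hdk⟩ := hDdom G hG k hy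
        by_cases hik : i = k
        · subst hik
          exact ⟨Sum.inl d, hd, Or.inr ⟨hdk, fun h => G.loopless.irrefl i ((show d = i from h) ▸ hdk)⟩⟩
        · obtain ⟨s, hsB, hsu⟩ := hBdom H hH u hx
          exact ⟨Sum.inr (i, s), hsB, Or.inl ⟨⟨rfl, hsu⟩, fun h => hik h⟩⟩
      · by_cases hik : i = k
        · subst hik
          have huv : u ≠ v := fun h => hxy (congrArg (fun w => Sum.inr (i, w)) h)
          obtain ⟨s, hsB, hxor⟩ := hBgen H hH u v hx hy huv
          rcases hxor with ⟨h1, h2⟩ | ⟨h1, h2⟩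
          · exact ⟨Sum.inr (i, s), hsB, Or.inl ⟨⟨rfl, h1⟩, fun h => h2 h.2⟩⟩
          · exact ⟨Sum.inr (i, s), hsB, Or.inr ⟨⟨rfl, h1⟩, fun h => h2 h.2⟩⟩
        · obtain ⟨s, hsB, hsu⟩ := hBdom H hH u hx
          exact ⟨Sum.inr (i, s), hsB, Or.inl ⟨⟨rfl, hsu⟩, fun h => hik h.1⟩⟩
    have hcard : S.ncard = Fintype.card V * SdA ℋ + Sgamma 𝒢 := by
      rw [ncard_decomp]
      have h1 : {i | Sum.inl i ∈ S} = D := rfl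
      have h2 : ∀ i : V, {u | Sum.inr (i, u) ∈ S} = B := fun _ => rfl
      simp only [h1, h2]
      rw [Finset.sum_const, Finset.card_univ, smul_eq_mul, hDcard, hBcard, add_comm]
    calc SdA (coronaFam 𝒢 ℋ) ≤ S.ncard := Nat.sInf_le ⟨S, rfl, hgen⟩
      _ = _ := hcard
  · -- lower bound
    obtain ⟨S, hScard, hSgen⟩ : ∃ S : Set (V ⊕ V × V'),
        S.ncard = SdA (coronaFam 𝒢 ℋ) ∧ IsSimAdjGen (coronaFam 𝒢 ℋ) S := by
      have h : SdA (coronaFam 𝒢 ℋ) ∈ {n | ∃ S : Set (V ⊕ V × V'),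
          S.ncard = n ∧ IsSimAdjGen (coronaFam 𝒢 ℋ) S} :=
        Nat.sInf_mem ⟨(Set.univ : Set (V ⊕ V × V')).ncard, Set.univ, rfl,
          fun K _ x y hx _ _ => absurd (Set.mem_univ x) hx⟩
      obtain ⟨T, h1, h2⟩ := h
      exact ⟨T, h1, h2⟩
    have hgen_i : ∀ i : V, IsSimAdjGen ℋ {u | Sum.inr (i, u) ∈ S} := by
      intro i H hH x y hx hy hxy
      obtain ⟨G, hG⟩ := h𝒢ne
      obtain ⟨s, hs, hxor⟩ := hSgen (corona G H) ⟨G, hG, H, hH, rfl⟩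
        (Sum.inr (i, x)) (Sum.inr (i, y)) hx hy
        (fun h => hxy (by simpa using (Sum.inr_injective h)))
      rcases s with j | ⟨j, u⟩
      · exfalso
        simp only [corona_adj_inl_inr] at hxor
        rcases hxor with ⟨h1, h2⟩ | ⟨h1, h2⟩ <;> exact h2 h1
      · simp only [corona_adj_inr_inr] at hxor
        have hj : j = i := by
          rcases hxor with ⟨⟨h, _⟩, _⟩ | ⟨⟨h, _⟩, _⟩ <;> exact h
        subst hj
        refine ⟨u, hs, ?_⟩
        rcases hxor with ⟨⟨_, h1⟩, h2⟩ | ⟨⟨_, h1⟩, h2⟩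
        · exact Or.inl ⟨h1, fun hy' => h2 ⟨rfl, hy'⟩⟩
        · exact Or.inr ⟨h1, fun hy' => h2 ⟨rfl, hy'⟩⟩
    have hge : ∀ i : V, SdA ℋ ≤ {u | Sum.inr (i, u) ∈ S}.ncard :=
      fun i => Nat.sInf_le ⟨_, rfl, hgen_i i⟩
    have hDdomset : IsSimDomSet 𝒢
        ({i | Sum.inl i ∈ S} ∪ {i | SdA ℋ + 1 ≤ {u | Sum.inr (i, u) ∈ S}.ncard}) := by
      intro G hG i hiD
      have hiSl : Sum.inl i ∉ S := fun h => hiD (Or.inl h)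
      have hiE : ¬ (SdA ℋ + 1 ≤ {u | Sum.inr (i, u) ∈ S}.ncard) := fun h => hiD (Or.inr h)
      have hcardi : {u | Sum.inr (i, u) ∈ S}.ncard = SdA ℋ := by
        have := hge i; omega
      obtain ⟨H, hH, v, hvB, hsub⟩ := hall _ ⟨hgen_i i, hcardi⟩
      obtain ⟨s, hs, hxor⟩ := hSgen (corona G H) ⟨G, hG, H, hH, rfl⟩
        (Sum.inl i) (Sum.inr (i, v)) hiSl hvB (by simp)
      rcases s with j | ⟨j, u⟩
      · simp only [corona_adj_inl_inl, corona_adj_inl_inr] at hxor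
        rcases hxor with ⟨h1, _⟩ | ⟨h1, h2⟩
        · exact ⟨j, Or.inl hs, h1⟩
        · exact absurd h1 (fun h => hiSl (h ▸ hs))
      · exfalso
        simp only [corona_adj_inr_inl, corona_adj_inr_inr] at hxor
        rcases hxor with ⟨h1, h2⟩ | ⟨⟨h1, _⟩, h2⟩
        · apply h2
          refine ⟨h1, ?_⟩
          have hu : u ∈ {u | Sum.inr (i, u) ∈ S} := by
            simp only [Set.mem_setOf_eq, ← h1]; exact hs
          exact H.adj_symm (hsub hu)
        · exact h2 h1
    have h1 : Sgamma 𝒢 ≤ {i | Sum.inl i ∈ S}.ncard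
        + {i | SdA ℋ + 1 ≤ {u | Sum.inr (i, u) ∈ S}.ncard}.ncard :=
      le_trans (Nat.sInf_le ⟨_, rfl, hDdomset⟩) (Set.ncard_union_le _ _)
    have h2 : Fintype.card V * SdA ℋ
        + {i | SdA ℋ + 1 ≤ {u | Sum.inr (i, u) ∈ S}.ncard}.ncard
        ≤ ∑ i : V, {u | Sum.inr (i, u) ∈ S}.ncard := by
      have step : ∑ i : V, (SdA ℋ +
          if SdA ℋ + 1 ≤ {u | Sum.inr (i, u) ∈ S}.ncard then 1 else 0)
          ≤ ∑ i : V, {u | Sum.inr (i, u) ∈ S}.ncard := by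
        apply Finset.sum_le_sum
        intro i _
        by_cases hi : SdA ℋ + 1 ≤ {u | Sum.inr (i, u) ∈ S}.ncard
        · rw [if_pos hi]; omega
        · rw [if_neg hi]; simpa using hge i
      refine le_trans (le_of_eq ?_) step
      rw [Finset.sum_add_distrib, Finset.sum_const, Finset.card_univ, smul_eq_mul,
        Finset.sum_boole]
      rw [Set.ncard_eq_toFinset_card', Set.toFinset_setOf]
      simp
    rw [← hScard, ncard_decomp S]
    calc Fintype.card V * SdA ℋ + Sgamma 𝒢
        ≤ Fintype.card V * SdA ℋ + ({i | Sum.inl i ∈ S}.ncard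
          + {i | SdA ℋ + 1 ≤ {u | Sum.inr (i, u) ∈ S}.ncard}.ncard) :=
          Nat.add_le_add_left h1 _
      _ = {i | Sum.inl i ∈ S}.ncard + (Fintype.card V * SdA ℋ
          + {i | SdA ℋ + 1 ≤ {u | Sum.inr (i, u) ∈ S}.ncard}.ncard) := by ring
      _ ≤ {i | Sum.inl i ∈ S}.ncard + ∑ i : V, {u | Sum.inr (i, u) ∈ S}.ncard :=
          Nat.add_le_add_left h2 _
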